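/- Suppose η_n → 0, √n·η_n → e with 0 ≤ e < ∞, and √n·θ_n → ν ∈ ℝ. Then the distribution of √n(θ̂_H − θ_n) under P_{n,θ_n} converges weakly to {Φ(−ν+e) − Φ(−ν−e)}·δ_{−ν} + (measure with density x ↦ φ(x)·1(|x+ν| > e)). -/

import Mathlib

open MeasureTheory ProbabilityTheory Real Filter Topology Set

noncomputable def stdGauss : Measure ℝ := gaussianReal 0 1

/-- Standard normal cdf. -/
noncomputable def Phi (x : ℝ) : ℝ := (stdGauss (Set.Iic x)).toReal

/-- Standard normal density. -/
noncomputable def phi (x : ℝ) : ℝ := gaussianPDFReal 0 1 x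

/-- Hard-thresholding estimator. -/
noncomputable def hardThresh (η y : ℝ) : ℝ := if η < |y| then y else 0

/-- Soft-thresholding (LASSO) estimator. -/
noncomputable def softThresh (η y : ℝ) : ℝ := Real.sign y * max (|y| - η) 0

/-- SCAD estimator. -/
noncomputable def scadThresh (a η y : ℝ) : ℝ :=
  if |y| ≤ 2 * η then Real.sign y * max (|y| - η) 0
  else if |y| ≤ a * η then ((a - 1) * y - Real.sign y * a * η) / (a - 2)
  else y

instance : IsProbabilityMeasure stdGauss := by
  unfold stdGauss; infer_instance

instance : NullSingletonClass stdGauss :=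
  ⟨fun a => gaussianReal_absolutelyContinuous 0 one_ne_zero (measure_singleton a)⟩

lemma stdGauss_Icc_toReal {a b : ℝ} (hab : a ≤ b) :
    (stdGauss (Set.Icc a b)).toReal = Phi b - Phi a := by
  have h1 : stdGauss (Set.Icc a b) = stdGauss (Set.Ioc a b) :=
    (measure_congr (Ioc_ae_eq_Icc (μ := stdGauss) (a := a) (b := b))).symm
  have h2 : stdGauss (Set.Iic b) = stdGauss (Set.Iic a) + stdGauss (Set.Ioc a b) := by
    rw [← Iic_union_Ioc_eq_Iic hab,
      measure_union (Iic_disjoint_Ioc le_rfl) measurableSet_Ioc]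
  have hfin1 : stdGauss (Set.Iic a) ≠ ⊤ := measure_ne_top _ _
  have hfin2 : stdGauss (Set.Ioc a b) ≠ ⊤ := measure_ne_top _ _
  rw [h1]
  have := congrArg ENNReal.toReal h2
  rw [ENNReal.toReal_add hfin1 hfin2] at this
  unfold Phi
  rw [this]
  ring

theorem stmt_12 (η θ : ℕ → ℝ) (hηpos : ∀ n, 0 < η n) (e ν : ℝ) (he : 0 ≤ e)
    (hη0 : Tendsto η atTop (𝓝 0))
    (hηe : Tendsto (fun n : ℕ => Real.sqrt n * η n) atTop (𝓝 e))
    (hθν : Tendsto (fun n : ℕ => Real.sqrt n * θ n) atTop (𝓝 ν)) :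
    ∀ f : BoundedContinuousFunction ℝ ℝ,
      Tendsto (fun n : ℕ => ∫ x, f x ∂(Measure.map
            (fun z => Real.sqrt n * (hardThresh (η n) (θ n + z / Real.sqrt n) - θ n)) stdGauss))
        atTop
        (𝓝 (∫ x, f x ∂(ENNReal.ofReal (Phi (-ν + e) - Phi (-ν - e)) • Measure.dirac (-ν)
          + volume.withDensity (fun x => ENNReal.ofReal
              (if e < |x + ν| then phi x else 0))))) := by
  intro f
  classical
  set A : Set ℝ := {x : ℝ | e < |x + ν|} with hA
  have hAmeas : MeasurableSet A :=
    measurableSet_lt measurable_const ((measurable_id.add_const ν).abs)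
  -- the withDensity measure is stdGauss restricted to A
  have hwd : volume.withDensity (fun x => ENNReal.ofReal (if e < |x + ν| then phi x else 0))
      = stdGauss.restrict A := by
    have hfun : (fun x : ℝ => ENNReal.ofReal (if e < |x + ν| then phi x else 0))
        = A.indicator (gaussianPDF 0 1) := by
      funext x
      by_cases hx : e < |x + ν| <;>
        simp [hA, Set.indicator, Set.mem_setOf_eq, hx, gaussianPDF, phi]
    rw [hfun, withDensity_indicator hAmeas, stdGauss,
      gaussianReal_of_var_ne_zero _ one_ne_zero, restrict_withDensity hAmeas]
  -- mass of the complement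
  have hcompl : Aᶜ = Set.Icc (-ν - e) (-ν + e) := by
    ext z
    simp only [hA, Set.mem_compl_iff, Set.mem_setOf_eq, not_lt, Set.mem_Icc, abs_le]
    constructor <;> intro h <;> constructor <;> linarith [h.1, h.2]
  have hc : 0 ≤ Phi (-ν + e) - Phi (-ν - e) := by
    have : (stdGauss (Set.Iic (-ν - e))).toReal ≤ (stdGauss (Set.Iic (-ν + e))).toReal :=
      ENNReal.toReal_mono (measure_ne_top _ _)
        (measure_mono (Iic_subset_Iic.mpr (by linarith)))
    unfold Phi; linarith
  have hmass : (stdGauss Aᶜ).toReal = Phi (-ν + e) - Phi (-ν - e) := by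
    rw [hcompl, stdGauss_Icc_toReal (by linarith)]
  -- RHS integral
  have hfinsmul : IsFiniteMeasure
      (ENNReal.ofReal (Phi (-ν + e) - Phi (-ν - e)) • Measure.dirac (-ν)) := by
    constructor
    simp only [Measure.smul_apply, smul_eq_mul, measure_univ, mul_one]
    exact ENNReal.ofReal_lt_top
  have hRHS : ∫ x, f x ∂(ENNReal.ofReal (Phi (-ν + e) - Phi (-ν - e)) • Measure.dirac (-ν)
      + volume.withDensity (fun x => ENNReal.ofReal (if e < |x + ν| then phi x else 0)))
      = (Phi (-ν + e) - Phi (-ν - e)) * f (-ν) + ∫ x in A, f x ∂stdGauss := by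
    rw [hwd, integral_add_measure (f.integrable _) (f.integrable _),
      integral_smul_measure, integral_dirac, ENNReal.toReal_ofReal hc, smul_eq_mul]
  rw [hRHS]
  -- measurability of the maps
  have hm : ∀ n : ℕ, Measurable fun z : ℝ =>
      Real.sqrt n * (hardThresh (η n) (θ n + z / Real.sqrt n) - θ n) := by
    intro n
    have h1 : Measurable fun z : ℝ => θ n + z / Real.sqrt n :=
      measurable_const.add (measurable_id.div_const _)
    unfold hardThresh
    exact ((Measurable.ite (measurableSet_lt measurable_const h1.abs) h1
      measurable_const).sub measurable_const).const_mul _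
  -- rewrite each pushforward integral
  have hmap : ∀ n : ℕ, ∫ x, f x ∂(Measure.map
      (fun z => Real.sqrt n * (hardThresh (η n) (θ n + z / Real.sqrt n) - θ n)) stdGauss)
      = ∫ z, f (Real.sqrt n * (hardThresh (η n) (θ n + z / Real.sqrt n) - θ n)) ∂stdGauss :=
    fun n => integral_map (hm n).aemeasurable
      f.continuous.measurable.aestronglyMeasurable
  simp only [hmap]
  -- limit function
  set L : ℝ → ℝ := fun z => if e < |z + ν| then f z else f (-ν) with hL
  -- value of ∫ L
  have hLint : ∫ z, L z ∂stdGauss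
      = (Phi (-ν + e) - Phi (-ν - e)) * f (-ν) + ∫ x in A, f x ∂stdGauss := by
    have hLeq : L = A.piecewise (fun z => f z) (fun _ => f (-ν)) := by
      funext z
      by_cases hz : e < |z + ν| <;>
        simp [hL, Set.piecewise, hA, Set.mem_setOf_eq, hz]
    rw [hLeq, integral_piecewise hAmeas ((f.integrable _).integrableOn)
      ((integrable_const _).integrableOn), setIntegral_const, measureReal_def, hmass, smul_eq_mul]
    ring
  rw [← hLint]
  -- dominated convergence
  apply tendsto_integral_of_dominated_convergence (fun _ => ‖f‖)
  · exact fun n => (f.continuous.measurable.comp (hm n)).aestronglyMeasurable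
  · exact integrable_const _
  · exact fun n => ae_of_all _ fun z => f.norm_coe_le_norm _
  · -- a.e. pointwise convergence
    have hsub : {z : ℝ | |z + ν| = e} ⊆ ({e - ν} ∪ {-e - ν} : Set ℝ) := by
      intro z hz
      simp only [Set.mem_setOf_eq] at hz
      rcases abs_eq he |>.mp hz with h | h
      · left; simp only [Set.mem_singleton_iff]; linarith
      · right; simp only [Set.mem_singleton_iff]; linarith
    have hnull : stdGauss {z : ℝ | |z + ν| = e} = 0 :=
      measure_mono_null hsub
        (measure_union_null (measure_singleton _) (measure_singleton _))
    have hae : ∀ᵐ z ∂stdGauss, ¬ (|z + ν| = e) := by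
      rw [ae_iff]
      simpa using hnull
    filter_upwards [hae] with z hz
    -- key simplification for n ≥ 1
    have key : ∀ n : ℕ, 1 ≤ n →
        Real.sqrt n * (hardThresh (η n) (θ n + z / Real.sqrt n) - θ n)
        = if Real.sqrt n * η n < |Real.sqrt n * θ n + z| then z
          else -(Real.sqrt n * θ n) := by
      intro n hn
      have hs : (0 : ℝ) < Real.sqrt n := Real.sqrt_pos.mpr (by exact_mod_cast hn)
      have hs' : Real.sqrt n ≠ 0 := hs.ne'
      have hmul : Real.sqrt n * (θ n + z / Real.sqrt n) = Real.sqrt n * θ n + z := by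
        field_simp
      have habs : |Real.sqrt n * θ n + z| = Real.sqrt n * |θ n + z / Real.sqrt n| := by
        rw [← hmul, abs_mul, abs_of_pos hs]
      have hiff : (Real.sqrt n * η n < |Real.sqrt n * θ n + z|)
          ↔ (η n < |θ n + z / Real.sqrt n|) := by
        rw [habs]
        exact mul_lt_mul_iff_right₀ hs
      unfold hardThresh
      by_cases hcond : η n < |θ n + z / Real.sqrt n|
      · rw [if_pos hcond, if_pos (hiff.mpr hcond)]
        field_simp
        ring
      · rw [if_neg hcond, if_neg (fun h => hcond (hiff.mp h))]
        ring
    have habs_tendsto : Tendsto (fun n : ℕ => |Real.sqrt n * θ n + z|) atTop (𝓝 |ν + z|) :=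
      (continuous_abs.tendsto _).comp (hθν.add_const z)
    by_cases hcase : e < |z + ν|
    · -- eventually equals z
      have hlt : e < |ν + z| := by rwa [add_comm z ν] at hcase
      have hev : ∀ᶠ n : ℕ in atTop,
          Real.sqrt n * η n < |Real.sqrt n * θ n + z| :=
        hηe.eventually_lt habs_tendsto hlt
      have hev' : (fun _ : ℕ => L z) =ᶠ[atTop]
          fun n : ℕ => f (Real.sqrt n * (hardThresh (η n) (θ n + z / Real.sqrt n) - θ n)) := by
        filter_upwards [hev, eventually_ge_atTop 1] with n h1 h2
        rw [key n h2, if_pos h1, hL]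
        simp [hcase]
      exact Tendsto.congr' hev' tendsto_const_nhds
    · -- eventually equals -(√n θ n)
      have hlt : |ν + z| < e := by
        rw [add_comm ν z]
        rcases lt_or_eq_of_le (not_lt.mp hcase) with h | h
        · exact h
        · exact absurd h hz
      have hev : ∀ᶠ n : ℕ in atTop,
          |Real.sqrt n * θ n + z| < Real.sqrt n * η n :=
        habs_tendsto.eventually_lt hηe hlt
      have hev' : (fun n : ℕ => f (-(Real.sqrt n * θ n))) =ᶠ[atTop]
          fun n : ℕ => f (Real.sqrt n * (hardThresh (η n) (θ n + z / Real.sqrt n) - θ n)) := by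
        filter_upwards [hev, eventually_ge_atTop 1] with n h1 h2
        rw [key n h2, if_neg (not_lt.mpr h1.le)]
      have hlim : Tendsto (fun n : ℕ => f (-(Real.sqrt n * θ n))) atTop (𝓝 (f (-ν))) :=
        (f.continuous.tendsto _).comp hθν.neg
      have hLz : L z = f (-ν) := by simp [hL, hcase]
      rw [hLz]
      exact Tendsto.congr' hev' hlim
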